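/- The linear endomorphism ad(𝐀) : 𝔤 → 𝔤, X ↦ ⁅𝐀, X⁆, has trace equal to a; in particular its trace is nonzero, so the Lie algebra 𝔤 is not unimodular. -/

import Mathlib

open Matrix

/-- The endomorphism `ad(𝐀) : 𝔤 → 𝔤`, `X ↦ ⁅𝐀, X⁆`, of the Lie algebra `𝔤` spanned by
`E₁, …, E_d, 𝐀` has trace `a ≠ 0`; hence `𝔤` is not unimodular. -/
theorem stmt12 (d : ℕ) (hd : 3 ≤ d) (a : ℝ) (ha : a ≠ 0)
    (M' : Matrix (Fin (d - 1)) (Fin (d - 1)) ℝ)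
    (hM' : ∀ i j : Fin (d - 1), M' i j = if i < j then 1 else if j < i then -1 else 0)
    (A : Matrix (Fin (d - 1) ⊕ Unit) (Fin (d - 1) ⊕ Unit) ℝ)
    (hA : A = fromBlocks (a • M')
      (a • Matrix.replicateCol Unit (Pi.single (⟨0, by omega⟩ : Fin (d - 1)) 1))
      (-(a • Matrix.replicateRow Unit (Pi.single (⟨0, by omega⟩ : Fin (d - 1)) 1)))
      (a • (1 : Matrix Unit Unit ℝ)))
    (E : (Fin (d - 1) ⊕ Unit) →
      Matrix ((Fin (d - 1) ⊕ Unit) ⊕ Unit) ((Fin (d - 1) ⊕ Unit) ⊕ Unit) ℝ)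
    (hE : ∀ i, E i = fromBlocks 0 (Matrix.replicateCol Unit (Pi.single i 1)) 0 0)
    (Abig : Matrix ((Fin (d - 1) ⊕ Unit) ⊕ Unit) ((Fin (d - 1) ⊕ Unit) ⊕ Unit) ℝ)
    (hAbig : Abig = fromBlocks A 0 0 0)
    (𝔤 : Submodule ℝ (Matrix ((Fin (d - 1) ⊕ Unit) ⊕ Unit) ((Fin (d - 1) ⊕ Unit) ⊕ Unit) ℝ))
    (h𝔤 : 𝔤 = Submodule.span ℝ (Set.range E ∪ {Abig}))
    (f : 𝔤 →ₗ[ℝ] 𝔤)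
    (hf : ∀ X : 𝔤, (f X : Matrix ((Fin (d - 1) ⊕ Unit) ⊕ Unit) ((Fin (d - 1) ⊕ Unit) ⊕ Unit) ℝ)
      = ⁅Abig, (X : Matrix ((Fin (d - 1) ⊕ Unit) ⊕ Unit) ((Fin (d - 1) ⊕ Unit) ⊕ Unit) ℝ)⁆) :
    LinearMap.trace ℝ 𝔤 f = a ∧ LinearMap.trace ℝ 𝔤 f ≠ 0 := by
  classical
  set g : ((Fin (d - 1) ⊕ Unit) ⊕ Unit) →
      Matrix ((Fin (d - 1) ⊕ Unit) ⊕ Unit) ((Fin (d - 1) ⊕ Unit) ⊕ Unit) ℝ :=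
    Sum.elim E (fun _ => Abig) with hg
  have hAa : A (Sum.inr ()) (Sum.inr ()) = a := by simp [hA]
  -- linear independence of the spanning family
  have hli : LinearIndependent ℝ g := by
    rw [Fintype.linearIndependent_iff]
    intro c hc
    have hcr : c (Sum.inr ()) = 0 := by
      have h1 := congrFun (congrFun hc (Sum.inl (Sum.inr ()))) (Sum.inl (Sum.inr ()))
      simp [hg, hE, hAbig, Matrix.sum_apply, Fintype.sum_sum_type, hAa, ha] at h1
      exact h1
    intro i
    rcases i with i | ⟨⟩
    · have h1 := congrFun (congrFun hc (Sum.inl i)) (Sum.inr ())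
      simp [hg, hE, hAbig, Matrix.sum_apply, Fintype.sum_sum_type, Pi.single_apply, hcr] at h1
      exact h1
    · exact hcr
  have hrange : Set.range g = Set.range E ∪ {Abig} := by
    simp [hg, Set.Sum.elim_range, Set.range_const]
  have hspan : Submodule.span ℝ (Set.range g) = 𝔤 := by rw [h𝔤, hrange]
  let b : Module.Basis ((Fin (d - 1) ⊕ Unit) ⊕ Unit) ℝ 𝔤 :=
    (Module.Basis.span hli).map (LinearEquiv.ofEq _ _ hspan)
  have hb : ∀ i, (b i : Matrix ((Fin (d - 1) ⊕ Unit) ⊕ Unit) ((Fin (d - 1) ⊕ Unit) ⊕ Unit) ℝ)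
      = g i := by
    intro i
    simp [b, Module.Basis.span_apply]
  -- the bracket on the spanning family
  have hbracket : ∀ j, ⁅Abig, g j⁆ = ∑ i, Abig i j • g i := by
    intro j
    rcases j with j | ⟨⟩
    · ext r c
      rcases r with (r | ⟨⟩) | ⟨⟩ <;> rcases c with (c | ⟨⟩) | ⟨⟩ <;>
        simp [Ring.lie_def, hg, hE, hAbig, Matrix.sum_apply, Matrix.mul_apply,
          Fintype.sum_sum_type, Pi.single_apply, mul_comm]
    · ext r c
      rcases r with (r | ⟨⟩) | ⟨⟩ <;> rcases c with (c | ⟨⟩) | ⟨⟩ <;>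
        simp [Ring.lie_def, hg, hE, hAbig, Matrix.sum_apply, Matrix.mul_apply,
          Fintype.sum_sum_type, Pi.single_apply, mul_comm]
  -- f equals the linear map induced by the matrix Abig in the basis b
  have hfeq : f = Matrix.toLin b b Abig := by
    apply b.ext
    intro j
    apply Subtype.ext
    rw [hf, hb, Matrix.toLin_self, hbracket]
    push_cast [Submodule.coe_sum]
    simp [hb]
  have htr : LinearMap.trace ℝ 𝔤 f = a := by
    rw [LinearMap.trace_eq_matrix_trace ℝ b f, hfeq, LinearMap.toMatrix_toLin]
    simp [hAbig, Matrix.trace, Fintype.sum_sum_type, hA, Matrix.diag, hM']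
  exact ⟨htr, htr ▸ ha⟩
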